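/- arXiv:1410.4611 — 7 statements merged into one kernel-verified Lean document; each statement's English description precedes it below -/
import Mathlib

section
/- Let J : ℝ → ℝ be a nonnegative, even, integrable function with ∫ J = 1, J not identically zero, and ∫ J(x) e^{λx} dx < ∞ for all λ > 0. For κ > 0 define c_κ = inf_{λ>0} (1/λ)(∫ J(y) e^{λy} dy − 1 + κ). Then c_κ > 0. -/
open MeasureTheory Real Set

theorem stmt_0
    (J : ℝ → ℝ)
    (hJnonneg : ∀ x, 0 ≤ J x)
    (hJeven : ∀ x, J (-x) = J x)
    (hJint : Integrable J)
    (hJmass : ∫ x, J x = 1)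
    (hJne : ¬ (∀ᵐ x, J x = 0))
    (hJexp : ∀ lam : ℝ, 0 < lam → Integrable (fun x => J x * Real.exp (lam * x)))
    (κ : ℝ) (hκ : 0 < κ) :
    0 < sInf {c : ℝ | ∃ lam : ℝ, 0 < lam ∧
      c = (1 / lam) * ((∫ y, J y * Real.exp (lam * y)) - 1 + κ)} := by
  have hJae : 0 ≤ᵐ[volume] J := Filter.Eventually.of_forall hJnonneg
  -- the support of J has positive measure
  have hsupp : 0 < volume (Function.support J) := by
    rw [← integral_pos_iff_support_of_nonneg_ae hJae hJint, hJmass]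
    norm_num
  -- find n with positive measure of support away from 0
  obtain ⟨n, hn⟩ : ∃ n : ℕ, 0 < volume (Function.support J ∩ {y : ℝ | 1/(n+1) ≤ |y|}) := by
    by_contra h
    push_neg at h
    have hz : ∀ n : ℕ, volume (Function.support J ∩ {y : ℝ | 1/(n+1) ≤ |y|}) = 0 :=
      fun n => le_antisymm (h n) zero_le
    have hsub : Function.support J ⊆
        {(0:ℝ)} ∪ ⋃ n : ℕ, (Function.support J ∩ {y : ℝ | 1/(n+1) ≤ |y|}) := by
      intro y hy
      rcases eq_or_ne y 0 with rfl | hy0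
      · exact Or.inl rfl
      · right
        have hy' : 0 < |y| := abs_pos.mpr hy0
        obtain ⟨n, hn⟩ := exists_nat_gt (1/|y|)
        refine mem_iUnion.mpr ⟨n, hy, ?_⟩
        have hn' : 1/|y| < (n:ℝ) + 1 := hn.trans (by linarith [Nat.cast_nonneg (α := ℝ) n])
        have : 1/((n:ℝ)+1) < |y| := by
          rw [div_lt_iff₀ (by positivity)]
          rw [div_lt_iff₀ hy'] at hn'
          linarith
        exact this.le
    have : volume (Function.support J) = 0 := by
      refine measure_mono_null hsub ?_
      refine measure_union_null (measure_singleton 0) ?_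
      exact measure_iUnion_null hz
    simp [this] at hsupp
  set δ : ℝ := 1/(n+1) with hδdef
  have hδpos : 0 < δ := by positivity
  set S : Set ℝ := {y : ℝ | δ ≤ |y|} with hSdef
  have hS : MeasurableSet S := measurableSet_le measurable_const measurable_abs
  set m : ℝ := ∫ y in S, J y with hmdef
  have hm : 0 < m := by
    rw [hmdef, setIntegral_pos_iff_support_of_nonneg_ae
      (ae_restrict_of_ae hJae) (hJint.integrableOn)]
    exact hn
  -- key bounds on the exponential-moment integral
  have key : ∀ lam : ℝ, 0 < lam →
      1 ≤ (∫ y, J y * Real.exp (lam * y)) ∧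
      m/2 * Real.exp (lam * δ) ≤ (∫ y, J y * Real.exp (lam * y)) := by
    intro lam hlam
    have hg : Integrable (fun y => J y * Real.exp (lam * y)) := hJexp lam hlam
    have hgneg : Integrable (fun y => J y * Real.exp (-(lam * y))) := by
      have := hg.comp_neg
      simpa [hJeven, mul_comm, mul_neg, neg_mul] using this
    have heq : (∫ y, J y * Real.exp (-(lam * y))) = ∫ y, J y * Real.exp (lam * y) := by
      rw [← integral_neg_eq_self (fun y => J y * Real.exp (lam * y)) volume]
      congr 1
      ext y
      rw [hJeven]
      ring_nf
    have hsumint : Integrable (fun y => J y * (Real.exp (lam * y) + Real.exp (-(lam * y)))) := by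
      have := hg.add hgneg
      refine this.congr (Filter.Eventually.of_forall fun y => ?_)
      simp [mul_add]
    have hsumeq : (∫ y, J y * (Real.exp (lam * y) + Real.exp (-(lam * y))))
        = 2 * ∫ y, J y * Real.exp (lam * y) := by
      simp only [mul_add]
      rw [integral_add hg hgneg, heq]
      ring
    have hsumnonneg : ∀ y, 0 ≤ J y * (Real.exp (lam * y) + Real.exp (-(lam * y))) := by
      intro y
      have := Real.exp_pos (lam * y)
      have := Real.exp_pos (-(lam * y))
      have := hJnonneg y
      positivity
    constructor
    · -- 1 ≤ I because exp + exp⁻¹ ≥ 2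
      have hmono : (∫ y, 2 * J y) ≤ ∫ y, J y * (Real.exp (lam * y) + Real.exp (-(lam * y))) := by
        refine integral_mono (hJint.const_mul 2) hsumint ?_
        intro y
        have hJy := hJnonneg y
        have hee : 2 ≤ Real.exp (lam * y) + Real.exp (-(lam * y)) := by
          rw [Real.exp_neg, ← sub_nonneg]
          have hepos := Real.exp_pos (lam * y)
          have heq2 : Real.exp (lam * y) + (Real.exp (lam * y))⁻¹ - 2
              = (Real.exp (lam * y) - 1)^2 / Real.exp (lam * y) := by
            field_simp; ring
          rw [heq2]; positivity
        calc (fun y => 2 * J y) y = J y * 2 := by ring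
          _ ≤ J y * (Real.exp (lam * y) + Real.exp (-(lam * y))) :=
            mul_le_mul_of_nonneg_left hee hJy
      rw [integral_const_mul, hJmass, hsumeq] at hmono
      linarith
    · -- the tail gives m/2 * exp(lam*δ)
      have hstep1 : (∫ y in S, J y * Real.exp (lam * δ))
          ≤ ∫ y in S, J y * (Real.exp (lam * y) + Real.exp (-(lam * y))) := by
        refine setIntegral_mono_on ((hJint.integrableOn).mul_const _)
          hsumint.integrableOn hS ?_
        intro y hy
        have hy' : δ ≤ |y| := hy
        have hJy := hJnonneg y
        have he := Real.exp_pos (lam * y)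
        have he' := Real.exp_pos (-(lam * y))
        have hbound : Real.exp (lam * δ) ≤ Real.exp (lam * y) + Real.exp (-(lam * y)) := by
          rcases abs_cases y with ⟨h1, _⟩ | ⟨h1, _⟩
          · have : lam * δ ≤ lam * y := by
              apply mul_le_mul_of_nonneg_left _ hlam.le
              rw [h1] at hy'; exact hy'
            have := Real.exp_le_exp.mpr this
            linarith
          · have : lam * δ ≤ -(lam * y) := by
              have : δ ≤ -y := by rw [h1] at hy'; exact hy'
              nlinarith
            have := Real.exp_le_exp.mpr this
            linarith
        exact mul_le_mul_of_nonneg_left hbound hJy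
      have hstep2 : (∫ y in S, J y * (Real.exp (lam * y) + Real.exp (-(lam * y))))
          ≤ ∫ y, J y * (Real.exp (lam * y) + Real.exp (-(lam * y))) :=
        setIntegral_le_integral hsumint (Filter.Eventually.of_forall hsumnonneg)
      have hconst : (∫ y in S, J y * Real.exp (lam * δ)) = m * Real.exp (lam * δ) := by
        rw [integral_mul_const]
      rw [hconst] at hstep1
      rw [hsumeq] at hstep2
      have := hstep1.trans hstep2
      linarith
  -- choose Λ and the lower bound b
  set Λ : ℝ := max 1 (Real.log (4/m) / δ) with hΛdef
  have hΛpos : 0 < Λ := lt_of_lt_of_le one_pos (le_max_left _ _)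
  set b : ℝ := min (κ/Λ) (m*δ/4) with hbdef
  have hbpos : 0 < b := lt_min (by positivity) (by positivity)
  have hne : {c : ℝ | ∃ lam : ℝ, 0 < lam ∧
      c = (1 / lam) * ((∫ y, J y * Real.exp (lam * y)) - 1 + κ)}.Nonempty :=
    ⟨(1/(1:ℝ)) * ((∫ y, J y * Real.exp (1 * y)) - 1 + κ), 1, one_pos, rfl⟩
  have hlb : ∀ c ∈ {c : ℝ | ∃ lam : ℝ, 0 < lam ∧
      c = (1 / lam) * ((∫ y, J y * Real.exp (lam * y)) - 1 + κ)}, b ≤ c := by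
    rintro c ⟨lam, hlam, rfl⟩
    obtain ⟨hI1, hI2⟩ := key lam hlam
    rcases le_total lam Λ with hle | hle
    · -- small lam : use I ≥ 1
      have h1 : κ / lam ≤ (1 / lam) * ((∫ y, J y * Real.exp (lam * y)) - 1 + κ) := by
        rw [div_eq_mul_inv, mul_comm, one_div]
        exact mul_le_mul_of_nonneg_left (by linarith) (by positivity)
      have h2 : κ / Λ ≤ κ / lam := div_le_div_of_nonneg_left hκ.le hlam hle
      calc b ≤ κ/Λ := min_le_left _ _
        _ ≤ κ/lam := h2
        _ ≤ _ := h1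
    · -- large lam : exponential growth
      have hexp4 : 4/m ≤ Real.exp (lam * δ) := by
        have hlog : Real.log (4/m) ≤ lam * δ := by
          have h1 : Real.log (4/m) / δ ≤ Λ := le_max_right _ _
          have h2 : Real.log (4/m) / δ ≤ lam := h1.trans hle
          calc Real.log (4/m) = (Real.log (4/m) / δ) * δ := by field_simp
            _ ≤ lam * δ := mul_le_mul_of_nonneg_right h2 hδpos.le
        calc 4/m = Real.exp (Real.log (4/m)) := (Real.exp_log (by positivity)).symm
          _ ≤ Real.exp (lam * δ) := Real.exp_le_exp.mpr hlog
      have hI2' : 2 ≤ ∫ y, J y * Real.exp (lam * y) := by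
        have : (2:ℝ) = m/2 * (4/m) := by field_simp; ring
        rw [this]
        exact le_trans (mul_le_mul_of_nonneg_left hexp4 (by positivity)) hI2
      have hexplin : lam * δ ≤ Real.exp (lam * δ) := by
        have := Real.add_one_le_exp (lam * δ)
        linarith
      have hmain : m * δ / 4 ≤ (1 / lam) * ((∫ y, J y * Real.exp (lam * y)) - 1 + κ) := by
        have hstep : m/4 * (lam * δ) ≤ (∫ y, J y * Real.exp (lam * y)) - 1 + κ := by
          have h1 : m/4 * (lam * δ) ≤ m/4 * Real.exp (lam * δ) :=
            mul_le_mul_of_nonneg_left hexplin (by positivity)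
          have h2 : m/4 * Real.exp (lam * δ) ≤ (∫ y, J y * Real.exp (lam * y)) / 2 := by
            linarith
          linarith
        have : (1/lam) * (m/4 * (lam * δ))
            ≤ (1 / lam) * ((∫ y, J y * Real.exp (lam * y)) - 1 + κ) :=
          mul_le_mul_of_nonneg_left hstep (by positivity)
        calc m * δ / 4 = (1/lam) * (m/4 * (lam * δ)) := by field_simp
          _ ≤ _ := this
      calc b ≤ m*δ/4 := min_le_right _ _
        _ ≤ _ := hmain
  exact lt_of_lt_of_le hbpos (le_csInf hne hlb)
end

section
/- Let J : ℝ → ℝ be a nonnegative, even, integrable function with ∫ J = 1 and all exponential moments finite. For κ > 0 let c_κ = inf_{λ>0} (1/λ)(∫ J(y) e^{λy} dy − 1 + κ). Then c_κ → 0 as κ → 0⁺. -/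
open MeasureTheory Real Set Filter

lemma sinh_mul_le_aux (a s : ℝ) (ha0 : 0 ≤ a) (ha1 : a ≤ 1) (hs : 0 ≤ s) :
    Real.sinh (a * s) ≤ a * Real.sinh s := by
  have h1 : Real.sinh (a * s) = ∫ u in (0:ℝ)..s, Real.cosh (a * u) * a := by
    rw [intervalIntegral.integral_eq_sub_of_hasDerivAt
      (f := fun u => Real.sinh (a * u)) (f' := fun u => Real.cosh (a * u) * a)
      (fun u _ => by
        simpa [Function.comp_def] using (Real.hasDerivAt_sinh (a * u)).comp u ((hasDerivAt_id u).const_mul a))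
      (Continuous.intervalIntegrable (by continuity) _ _)]
    simp
  have h2 : a * Real.sinh s = ∫ u in (0:ℝ)..s, Real.cosh u * a := by
    rw [intervalIntegral.integral_eq_sub_of_hasDerivAt
      (f := fun u => Real.sinh u * a) (f' := fun u => Real.cosh u * a)
      (fun u _ => (Real.hasDerivAt_sinh u).mul_const a)
      (Continuous.intervalIntegrable (by continuity) _ _)]
    simp [mul_comm]
  rw [h1, h2]
  apply intervalIntegral.integral_mono_on hs
    (Continuous.intervalIntegrable (by continuity) _ _)
    (Continuous.intervalIntegrable (by continuity) _ _)
  intro u hu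
  have h3 : Real.cosh (a * u) ≤ Real.cosh u := by
    rw [Real.cosh_le_cosh, abs_mul, abs_of_nonneg ha0]
    calc a * |u| ≤ 1 * |u| := by nlinarith [abs_nonneg u]
    _ = |u| := one_mul _
  nlinarith [Real.cosh_pos (a*u)]

lemma cosh_sub_one_eq (x : ℝ) : Real.cosh x - 1 = 2 * Real.sinh (x/2) ^ 2 := by
  have h := Real.cosh_two_mul (x/2)
  have h2 : 2 * (x/2) = x := by ring
  rw [h2] at h
  rw [h, Real.cosh_sq]
  ring

lemma cosh_mul_sub_one_le (l t : ℝ) (hl0 : 0 ≤ l) (hl1 : l ≤ 1) :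
    Real.cosh (l * t) - 1 ≤ l ^ 2 * (Real.cosh t - 1) := by
  have habs : Real.cosh (l * t) = Real.cosh (l * |t|) := by
    rw [← Real.cosh_abs (l*t), abs_mul, abs_of_nonneg hl0]
  rw [habs, ← Real.cosh_abs t, cosh_sub_one_eq, cosh_sub_one_eq]
  have h1 : l * |t| / 2 = l * (|t| / 2) := by ring
  have h2 : Real.sinh (l * (|t|/2)) ≤ l * Real.sinh (|t|/2) :=
    sinh_mul_le_aux l (|t|/2) hl0 hl1 (by positivity)
  have h3 : 0 ≤ Real.sinh (l * (|t|/2)) := by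
    rw [Real.sinh_nonneg_iff]; positivity
  rw [h1]
  nlinarith [Real.sinh_nonneg_iff.mpr (show (0:ℝ) ≤ |t|/2 by positivity)]

theorem stmt_1
    (J : ℝ → ℝ)
    (hJnonneg : ∀ x, 0 ≤ J x)
    (hJeven : ∀ x, J (-x) = J x)
    (hJint : Integrable J)
    (hJmass : ∫ x, J x = 1)
    (hJexp : ∀ lam : ℝ, 0 < lam → Integrable (fun x => J x * Real.exp (lam * x)))
    (c : ℝ → ℝ)
    (hc : ∀ κ : ℝ, 0 < κ →
      c κ = sInf {v : ℝ | ∃ lam : ℝ, 0 < lam ∧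
        v = (1 / lam) * ((∫ y, J y * Real.exp (lam * y)) - 1 + κ)}) :
    Tendsto c (nhdsWithin 0 (Ioi 0)) (nhds 0) := by
  -- negative-side integrability and symmetry
  have hnegint : ∀ l : ℝ, 0 < l → Integrable (fun y => J y * Real.exp (-(l * y))) := by
    intro l hl
    have h := (hJexp l hl).comp_neg
    refine h.congr (Eventually.of_forall fun y => ?_)
    simp [hJeven y, mul_comm]
  have hnegeq : ∀ l : ℝ, 0 < l →
      (∫ y, J y * Real.exp (-(l * y))) = ∫ y, J y * Real.exp (l * y) := by
    intro l hl
    have h := integral_neg_eq_self (fun x => J x * Real.exp (l * x)) (volume : Measure ℝ)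
    rw [← h]
    congr 1
    funext y
    rw [hJeven y]
    ring_nf
  -- cosh version
  have hcoshfun : ∀ l : ℝ, (fun y => J y * Real.cosh (l * y)) =
      fun y => (J y * Real.exp (l * y) + J y * Real.exp (-(l * y))) / 2 := by
    intro l
    funext y
    rw [Real.cosh_eq]
    ring
  have hcoshint : ∀ l : ℝ, 0 < l → Integrable (fun y => J y * Real.cosh (l * y)) := by
    intro l hl
    rw [hcoshfun l]
    exact ((hJexp l hl).add (hnegint l hl)).div_const 2
  have hcosheq : ∀ l : ℝ, 0 < l →
      (∫ y, J y * Real.cosh (l * y)) = ∫ y, J y * Real.exp (l * y) := by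
    intro l hl
    rw [hcoshfun l, integral_div, integral_add (hJexp l hl) (hnegint l hl), hnegeq l hl]
    ring
  -- lower bound on moment integral
  have hIlow : ∀ l : ℝ, 0 < l → 1 ≤ ∫ y, J y * Real.exp (l * y) := by
    intro l hl
    rw [← hcosheq l hl, ← hJmass]
    refine integral_mono hJint (hcoshint l hl) fun y => ?_
    exact le_mul_of_one_le_right (hJnonneg y) (Real.one_le_cosh _)
  -- the constant C₀
  have hgint : Integrable (fun y => J y * (Real.cosh y - 1)) := by
    have h := (hcoshint 1 one_pos).sub hJint
    refine h.congr (Eventually.of_forall fun y => ?_)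
    simp [mul_sub]
  set C₀ : ℝ := ∫ y, J y * (Real.cosh y - 1) with hC₀def
  have hC₀ : 0 ≤ C₀ := integral_nonneg fun y =>
    mul_nonneg (hJnonneg y) (by nlinarith [Real.one_le_cosh y])
  -- upper bound for small l
  have hIup : ∀ l : ℝ, 0 < l → l ≤ 1 →
      (∫ y, J y * Real.exp (l * y)) ≤ 1 + l ^ 2 * C₀ := by
    intro l hl hl1
    rw [← hcosheq l hl]
    have hrint : Integrable (fun y => J y + l ^ 2 * (J y * (Real.cosh y - 1))) :=
      hJint.add (hgint.const_mul _)
    have hmono : (∫ y, J y * Real.cosh (l * y)) ≤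
        ∫ y, J y + l ^ 2 * (J y * (Real.cosh y - 1)) := by
      refine integral_mono (hcoshint l hl) hrint fun y => ?_
      have hkey := cosh_mul_sub_one_le l y hl.le hl1
      nlinarith [hJnonneg y]
    calc (∫ y, J y * Real.cosh (l * y)) ≤ _ := hmono
      _ = (∫ y, J y) + l ^ 2 * C₀ := by
          rw [integral_add hJint (hgint.const_mul _), integral_const_mul]
      _ = 1 + l ^ 2 * C₀ := by rw [hJmass]
  -- c κ is nonnegative and bounded
  have hmem : ∀ κ l : ℝ, 0 < l →
      (1 / l) * ((∫ y, J y * Real.exp (l * y)) - 1 + κ) ∈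
      {v : ℝ | ∃ lam : ℝ, 0 < lam ∧
        v = (1 / lam) * ((∫ y, J y * Real.exp (lam * y)) - 1 + κ)} := by
    intro κ l hl
    exact ⟨l, hl, rfl⟩
  have hbdd : ∀ κ : ℝ, 0 < κ → ∀ v ∈ {v : ℝ | ∃ lam : ℝ, 0 < lam ∧
      v = (1 / lam) * ((∫ y, J y * Real.exp (lam * y)) - 1 + κ)}, (0:ℝ) ≤ v := by
    rintro κ hκ v ⟨l, hl, rfl⟩
    have h := hIlow l hl
    have : (0:ℝ) ≤ (∫ y, J y * Real.exp (l * y)) - 1 + κ := by linarith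
    positivity
  have hcnonneg : ∀ κ : ℝ, 0 < κ → 0 ≤ c κ := by
    intro κ hκ
    rw [hc κ hκ]
    exact le_csInf ⟨_, hmem κ 1 one_pos⟩ (hbdd κ hκ)
  have hcle : ∀ κ l : ℝ, 0 < κ → 0 < l →
      c κ ≤ (1 / l) * ((∫ y, J y * Real.exp (l * y)) - 1 + κ) := by
    intro κ l hκ hl
    rw [hc κ hκ]
    exact csInf_le ⟨0, hbdd κ hκ⟩ (hmem κ l hl)
  -- final ε-δ argument
  rw [Metric.tendsto_nhdsWithin_nhds]
  intro ε hε
  set l : ℝ := min 1 (ε / (2 * (C₀ + 1))) with hldef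
  have hl0 : 0 < l := lt_min one_pos (by positivity)
  have hl1 : l ≤ 1 := min_le_left _ _
  have hlC : l * C₀ < ε / 2 := by
    have h1 : l ≤ ε / (2 * (C₀ + 1)) := min_le_right _ _
    have h2 : l * C₀ ≤ (ε / (2 * (C₀ + 1))) * C₀ := by nlinarith
    have h3 : (ε / (2 * (C₀ + 1))) * C₀ < ε / 2 := by
      rw [div_mul_eq_mul_div, div_lt_div_iff₀ (by positivity) (by norm_num)]
      nlinarith
    linarith
  refine ⟨l * ε / 2, by positivity, fun κ hκ hdist => ?_⟩
  have hκ0 : 0 < κ := hκ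
  have hκδ : κ < l * ε / 2 := by
    rw [Real.dist_eq, sub_zero, abs_of_pos hκ0] at hdist
    exact hdist
  have hup := hcle κ l hκ0 hl0
  have hI := hIup l hl0 hl1
  have hcκ : c κ < ε := by
    have h1 : (1 / l) * ((∫ y, J y * Real.exp (l * y)) - 1 + κ) ≤
        (1 / l) * (l ^ 2 * C₀ + κ) := by
      apply mul_le_mul_of_nonneg_left (by linarith) (by positivity)
    have h2 : (1 / l) * (l ^ 2 * C₀ + κ) = l * C₀ + κ / l := by
      field_simp
    have h3 : κ / l < ε / 2 := by
      rw [div_lt_iff₀ hl0]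
      nlinarith
    linarith
  rw [Real.dist_eq, sub_zero, abs_of_nonneg (hcnonneg κ hκ0)]
  exact hcκ
end

section
/- Let J : ℝ → ℝ be a nonnegative, even, integrable function with ∫ J = 1, J ≢ 0, and all exponential moments finite. For each κ > 0 there exists a unique λ_κ > 0 such that λ_κ ∫ J(y) y e^{λ_κ y} dy − ∫ J(y) e^{λ_κ y} dy + 1 = κ, and λ_κ → 0 as κ → 0⁺. -/
open MeasureTheory Real Set Filter

noncomputable def hfun (y l : ℝ) : ℝ := l * y * Real.exp (l * y) - Real.exp (l * y) + 1

lemma hfun_hasDerivAt (y l : ℝ) :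
    HasDerivAt (fun t => hfun y t) (l * y ^ 2 * Real.exp (l * y)) l := by
  have h1 : HasDerivAt (fun t : ℝ => t * y) y l := hasDerivAt_mul_const y
  have he : HasDerivAt (fun t : ℝ => Real.exp (t * y)) (Real.exp (l * y) * y) l :=
    h1.exp
  have h2 : HasDerivAt (fun t : ℝ => t * y * Real.exp (t * y))
      (y * Real.exp (l * y) + (l * y) * (Real.exp (l * y) * y)) l := h1.mul he
  have := (h2.sub he).add_const 1
  refine this.congr_deriv ?_
  ring

lemma hfun_cont (y : ℝ) : Continuous (fun t => hfun y t) := by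
  unfold hfun; fun_prop

lemma hfun_zero (y : ℝ) : hfun y 0 = 0 := by simp [hfun]

lemma hfun_monotoneOn (y : ℝ) : MonotoneOn (hfun y) (Ici 0) := by
  apply monotoneOn_of_deriv_nonneg (convex_Ici 0) ((hfun_cont y).continuousOn)
  · intro x hx
    exact (hfun_hasDerivAt y x).differentiableAt.differentiableWithinAt
  · intro x hx
    rw [(hfun_hasDerivAt y x).deriv]
    rw [interior_Ici] at hx
    have hx0 : (0:ℝ) < x := hx
    positivity

lemma hfun_strictMonoOn (y : ℝ) (hy : y ≠ 0) : StrictMonoOn (hfun y) (Ici 0) := by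
  apply strictMonoOn_of_deriv_pos (convex_Ici 0) ((hfun_cont y).continuousOn)
  intro x hx
  rw [(hfun_hasDerivAt y x).deriv]
  rw [interior_Ici] at hx
  have : (0:ℝ) < x := hx
  positivity

lemma hfun_nonneg (y l : ℝ) (hl : 0 ≤ l) : 0 ≤ hfun y l := by
  have := hfun_monotoneOn y (self_mem_Ici) hl hl
  rwa [hfun_zero] at this

lemma hfun_pos (y l : ℝ) (hy : y ≠ 0) (hl : 0 < l) : 0 < hfun y l := by
  have := hfun_strictMonoOn y hy (self_mem_Ici) (le_of_lt hl) hl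
  rwa [hfun_zero] at this

lemma hfun_one_le (y : ℝ) (hy : 0 ≤ y) : hfun y 1 ≤ y ^ 2 * Real.exp y := by
  have h := Real.add_one_le_exp y
  have he : 0 < Real.exp y := Real.exp_pos y
  simp only [hfun, one_mul]
  nlinarith [sq_nonneg (y - 1), sq_nonneg y, mul_nonneg (mul_nonneg hy hy) hy]

lemma hfun_growth (y : ℝ) (hy : 0 ≤ y) (l : ℝ) (hl : 1 ≤ l) :
    l * hfun y 1 ≤ hfun y l := by
  set φ : ℝ → ℝ := fun t => hfun y t - t * hfun y 1 with hφ
  have key : MonotoneOn φ (Ici 1) := by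
    apply monotoneOn_of_deriv_nonneg (convex_Ici 1)
    · exact ((hfun_cont y).sub (continuous_id.mul continuous_const)).continuousOn
    · intro x hx
      exact ((hfun_hasDerivAt y x).sub ((hasDerivAt_mul_const (hfun y 1)))).differentiableAt.differentiableWithinAt
    · intro x hx
      rw [interior_Ici] at hx
      have hx1 : (1:ℝ) < x := hx
      show 0 ≤ deriv ((fun t => hfun y t) - fun x => x * hfun y 1) x
      rw [((hfun_hasDerivAt y x).sub (hasDerivAt_mul_const (hfun y 1))).deriv]
      have h1 : hfun y 1 ≤ y ^ 2 * Real.exp y := hfun_one_le y hy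
      have h2 : y ^ 2 * Real.exp y ≤ x * y ^ 2 * Real.exp (x * y) := by
        have hee : Real.exp y ≤ Real.exp (x * y) := by
          apply Real.exp_le_exp.2
          nlinarith
        have e1 : y ^ 2 * Real.exp y ≤ y ^ 2 * Real.exp (x * y) := by
          apply mul_le_mul_of_nonneg_left hee (sq_nonneg y)
        have e2 : y ^ 2 * Real.exp (x * y) ≤ x * (y ^ 2 * Real.exp (x * y)) := by
          apply le_mul_of_one_le_left (by positivity) (le_of_lt hx1)
        nlinarith
      linarith
  have := key (self_mem_Ici) hl hl
  simp only [hφ] at this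
  linarith

theorem stmt_3
    (J : ℝ → ℝ)
    (hJnonneg : ∀ x, 0 ≤ J x)
    (hJeven : ∀ x, J (-x) = J x)
    (hJint : Integrable J)
    (hJmass : ∫ x, J x = 1)
    (hJne : ¬ (∀ᵐ x, J x = 0))
    (hJexp : ∀ lam : ℝ, 0 < lam → Integrable (fun x => J x * Real.exp (lam * x)))
    (hJexp1 : ∀ lam : ℝ, 0 < lam → Integrable (fun x => J x * x * Real.exp (lam * x))) :
    (∀ κ : ℝ, 0 < κ → ∃! lam : ℝ, 0 < lam ∧
        lam * (∫ y, J y * y * Real.exp (lam * y)) - (∫ y, J y * Real.exp (lam * y)) + 1 = κ) ∧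
    (∀ L : ℝ → ℝ,
      (∀ κ : ℝ, 0 < κ → 0 < L κ ∧
        (L κ) * (∫ y, J y * y * Real.exp (L κ * y)) - (∫ y, J y * Real.exp (L κ * y)) + 1 = κ) →
      Tendsto L (nhdsWithin 0 (Ioi 0)) (nhds 0)) := by
  -- integrability of the integrand
  have integ : ∀ l : ℝ, 0 ≤ l → Integrable (fun y => J y * hfun y l) := by
    intro l hl
    rcases eq_or_lt_of_le hl with h | h
    · have he : (fun y => J y * hfun y l) = fun _ => (0:ℝ) := by
        funext y; rw [← h, hfun_zero]; ring
      rw [he]; exact integrable_zero _ _ _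
    · have he : (fun y => J y * hfun y l)
          = fun y => l * (J y * y * Real.exp (l * y)) - J y * Real.exp (l * y) + J y := by
        funext y; simp only [hfun]; ring
      rw [he]
      exact (((hJexp1 l h).const_mul l).sub (hJexp l h)).add hJint
  set G : ℝ → ℝ := fun l => ∫ y, J y * hfun y l with hGdef
  have Grep : ∀ l : ℝ, 0 < l →
      G l = l * (∫ y, J y * y * Real.exp (l * y)) - (∫ y, J y * Real.exp (l * y)) + 1 := by
    intro l hl
    have he : (fun y => J y * hfun y l)
        = fun y => l * (J y * y * Real.exp (l * y)) - J y * Real.exp (l * y) + J y := by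
      funext y; simp only [hfun]; ring
    simp only [hGdef, he]
    have i1 : Integrable (fun x : ℝ => l * (J x * x * Real.exp (l * x)) - J x * Real.exp (l * x)) :=
      ((hJexp1 l hl).const_mul l).sub (hJexp l hl)
    rw [integral_add i1 hJint,
      integral_sub ((hJexp1 l hl).const_mul l) (hJexp l hl), integral_const_mul, hJmass]
  have G0 : G 0 = 0 := by
    simp only [hGdef, hfun_zero, mul_zero, integral_zero]
  have Gmono : StrictMonoOn G (Ici 0) := by
    intro a ha b hb hab
    have ha' : a ∈ Ici (0:ℝ) := ha
    have hb' : b ∈ Ici (0:ℝ) := hb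
    have hintab : Integrable (fun y => J y * hfun y b - J y * hfun y a) :=
      (integ b hb').sub (integ a ha')
    have key : 0 < ∫ y, (J y * hfun y b - J y * hfun y a) := by
      apply (integral_pos_iff_support_of_nonneg_ae ?_ hintab).2
      · -- measure of support positive
        have hsub : {y : ℝ | ¬ J y = 0} ⊆
            (Function.support fun y => J y * hfun y b - J y * hfun y a) ∪ {0} := by
          intro y hy
          by_cases hy0 : y = 0
          · exact Or.inr hy0
          · left
            have hJpos : 0 < J y := lt_of_le_of_ne (hJnonneg y) (Ne.symm hy)
            have hlt : hfun y a < hfun y b := hfun_strictMonoOn y hy0 ha' hb' hab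
            have h3 : 0 < J y * (hfun y b - hfun y a) := mul_pos hJpos (sub_pos.2 hlt)
            have : 0 < J y * hfun y b - J y * hfun y a := by linarith [h3]; 
            exact ne_of_gt this
        rw [ae_iff] at hJne
        have h1 : volume {y : ℝ | ¬ J y = 0}
            ≤ volume (Function.support fun y => J y * hfun y b - J y * hfun y a) := by
          calc volume {y : ℝ | ¬ J y = 0}
              ≤ volume ((Function.support fun y => J y * hfun y b - J y * hfun y a) ∪ {0}) :=
                measure_mono hsub
            _ ≤ volume (Function.support fun y => J y * hfun y b - J y * hfun y a)
                + volume ({0} : Set ℝ) := measure_union_le _ _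
            _ = volume (Function.support fun y => J y * hfun y b - J y * hfun y a) := by
                simp
        exact lt_of_lt_of_le (pos_iff_ne_zero.2 hJne) h1
      · apply Eventually.of_forall
        intro y
        have h1 : hfun y a ≤ hfun y b := hfun_monotoneOn y ha' hb' hab.le
        have h2 := hJnonneg y
        simp only [Pi.zero_apply]
        nlinarith [mul_le_mul_of_nonneg_left h1 h2]
    have : 0 < G b - G a := by
      rwa [hGdef, ← integral_sub (integ b hb') (integ a ha')]
    linarith
  have Gcont : ContinuousOn G (Ici 0) := by
    intro l0 hl0
    have hev : ∀ᶠ l in nhdsWithin l0 (Ici 0), l ∈ Icc (0:ℝ) (l0 + 1) := by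
      have h1 : ∀ᶠ l in nhdsWithin l0 (Ici 0), l ∈ Ici (0:ℝ) :=
        eventually_mem_nhdsWithin
      have h2 : ∀ᶠ l in nhdsWithin l0 (Ici 0), l < l0 + 1 :=
        eventually_nhdsWithin_of_eventually_nhds (eventually_lt_nhds (lt_add_one l0))
      filter_upwards [h1, h2] with l hl1 hl2
      exact ⟨hl1, hl2.le⟩
    apply continuousWithinAt_of_dominated
      (bound := fun y => J y * hfun y (l0 + 1))
    · filter_upwards [hev] with l hl
      exact (integ l hl.1).aestronglyMeasurable
    · filter_upwards [hev] with l hl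
      apply Eventually.of_forall
      intro y
      rw [Real.norm_eq_abs, abs_of_nonneg (mul_nonneg (hJnonneg y) (hfun_nonneg y l hl.1))]
      exact mul_le_mul_of_nonneg_left
        (hfun_monotoneOn y hl.1 (by exact add_nonneg (mem_Ici.mp hl0) zero_le_one) hl.2) (hJnonneg y)
    · exact integ (l0 + 1) (add_nonneg hl0 zero_le_one)
    · exact Eventually.of_forall fun y =>
        ((continuous_const.mul (hfun_cont y)).continuousAt).continuousWithinAt
  -- positive mass on the right half line
  have Apos : 0 < volume ({y : ℝ | ¬ J y = 0} ∩ Ioi 0) := by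
    set A : Set ℝ := {y | ¬ J y = 0} with hA
    have hAneg : A ∩ Iio 0 = (fun x : ℝ => -x) ⁻¹' (A ∩ Ioi 0) := by
      ext x
      simp only [hA, mem_inter_iff, mem_Iio, mem_preimage, mem_Ioi, mem_setOf_eq, hJeven x,
        neg_pos]
    have hmeas : volume (A ∩ Iio 0) = volume (A ∩ Ioi 0) := by
      rw [hAneg]
      exact Measure.measure_preimage_neg volume _
    have hcover : A ⊆ (A ∩ Ioi 0) ∪ (A ∩ Iio 0) ∪ {0} := by
      intro x hx
      rcases lt_trichotomy x 0 with h | h | h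
      · exact Or.inl (Or.inr ⟨hx, h⟩)
      · exact Or.inr h
      · exact Or.inl (Or.inl ⟨hx, h⟩)
    rw [ae_iff] at hJne
    by_contra hcon
    push_neg at hcon
    have hz' : volume (A ∩ Ioi 0) = 0 := le_antisymm hcon zero_le
    apply hJne
    have : volume A ≤ volume (A ∩ Ioi 0) + volume (A ∩ Iio 0) + volume ({0} : Set ℝ) := by
      calc volume A ≤ volume ((A ∩ Ioi 0) ∪ (A ∩ Iio 0) ∪ {0}) := measure_mono hcover
        _ ≤ volume ((A ∩ Ioi 0) ∪ (A ∩ Iio 0)) + volume ({0} : Set ℝ) := measure_union_le _ _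
        _ ≤ volume (A ∩ Ioi 0) + volume (A ∩ Iio 0) + volume ({0} : Set ℝ) := by
            gcongr
            exact measure_union_le _ _
    rw [hz', hmeas, hz'] at this
    simpa using le_antisymm (by simpa using this) zero_le
  -- the truncated function and its integral
  set Jp : ℝ → ℝ := fun y => if 0 ≤ y then J y else 0 with hJp
  have hJpind : ∀ l : ℝ, (fun y => Jp y * hfun y l)
      = Set.indicator (Ici 0) (fun y => J y * hfun y l) := by
    intro l
    funext y
    by_cases h : 0 ≤ y <;> simp [hJp, Set.indicator, h, mem_Ici]
  have integp : ∀ l : ℝ, 0 ≤ l → Integrable (fun y => Jp y * hfun y l) := by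
    intro l hl
    rw [hJpind l]
    exact (integ l hl).indicator measurableSet_Ici
  set C : ℝ := ∫ y, Jp y * hfun y 1 with hC
  have Cpos : 0 < C := by
    rw [hC]
    apply (integral_pos_iff_support_of_nonneg_ae ?_ (integp 1 zero_le_one)).2
    · apply lt_of_lt_of_le Apos
      apply measure_mono
      intro y hy
      obtain ⟨hy1, hy2⟩ := hy
      rw [mem_Ioi] at hy2
      rw [mem_setOf_eq] at hy1
      have hJpos : 0 < J y := lt_of_le_of_ne (hJnonneg y) (Ne.symm hy1)
      have hhpos : 0 < hfun y 1 := hfun_pos y 1 (ne_of_gt hy2) one_pos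
      have : Jp y = J y := by simp [hJp, hy2.le]
      simp only [Function.mem_support]
      rw [this]
      positivity
    · apply Eventually.of_forall
      intro y
      simp only [Pi.zero_apply]
      apply mul_nonneg _ (hfun_nonneg y 1 zero_le_one)
      simp only [hJp]
      split <;> simp [hJnonneg y]
  have Jpnonneg : ∀ y, 0 ≤ Jp y := by
    intro y; simp only [hJp]; split <;> simp [hJnonneg y]
  -- growth of G
  have Ggrow : ∀ l : ℝ, 1 ≤ l → l * C ≤ G l := by
    intro l hl
    have hl0 : (0:ℝ) ≤ l := by linarith
    have step1 : l * C = ∫ y, l * (Jp y * hfun y 1) := (integral_const_mul l _).symm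
    have step2 : (∫ y, l * (Jp y * hfun y 1)) ≤ ∫ y, Jp y * hfun y l := by
      apply integral_mono ((integp 1 zero_le_one).const_mul l) (integp l hl0)
      intro y
      by_cases h : 0 ≤ y
      · calc l * (Jp y * hfun y 1) = Jp y * (l * hfun y 1) := by ring
          _ ≤ Jp y * hfun y l := mul_le_mul_of_nonneg_left (hfun_growth y h l hl) (Jpnonneg y)
      · simp [hJp, h]
    have step3 : (∫ y, Jp y * hfun y l) ≤ G l := by
      apply integral_mono (integp l hl0) (integ l hl0)
      intro y
      apply mul_le_mul_of_nonneg_right _ (hfun_nonneg y l hl0)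
      simp only [hJp]
      split <;> simp [hJnonneg y]
    linarith
  constructor
  · -- existence and uniqueness
    intro κ hκ
    set B : ℝ := max 1 (κ / C) with hB
    have hB1 : (1:ℝ) ≤ B := le_max_left _ _
    have hB0 : (0:ℝ) ≤ B := by linarith
    have hκB : κ ≤ G B := by
      have h1 : κ / C * C ≤ B * C :=
        mul_le_mul_of_nonneg_right (le_max_right _ _) Cpos.le
      rw [div_mul_cancel₀ κ (ne_of_gt Cpos)] at h1
      linarith [Ggrow B hB1]
    have hmem : κ ∈ Icc (G 0) (G B) := by
      rw [G0]; exact ⟨hκ.le, hκB⟩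
    obtain ⟨lam, hlam_mem, hlam⟩ :=
      intermediate_value_Icc hB0 (Gcont.mono (Icc_subset_Ici_self)) hmem
    have hlpos : 0 < lam := by
      rcases eq_or_lt_of_le hlam_mem.1 with h | h
      · exfalso; rw [← h, G0] at hlam; linarith
      · exact h
    refine ⟨lam, ⟨hlpos, ?_⟩, ?_⟩
    · have := Grep lam hlpos
      linarith [this, hlam]
    · rintro l' ⟨hl'pos, hl'eq⟩
      have h1 : G l' = κ := by
        rw [Grep l' hl'pos]; linarith [hl'eq]
      apply Gmono.injOn (le_of_lt hl'pos) (le_of_lt hlpos)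
      rw [h1, hlam]
  · -- the limit
    intro L hL
    rw [Metric.tendsto_nhdsWithin_nhds]
    intro ε hε
    set ε' : ℝ := min ε 1 with hε'
    have hε'pos : 0 < ε' := lt_min hε one_pos
    refine ⟨G ε', ?_, ?_⟩
    · have h := Gmono self_mem_Ici (le_of_lt hε'pos) hε'pos
      rwa [G0] at h
    · intro κ hκIoi hdist
      have hκ : (0:ℝ) < κ := hκIoi
      obtain ⟨hLpos, hLeq⟩ := hL κ hκ
      have hGL : G (L κ) = κ := by
        rw [Grep (L κ) hLpos]; linarith [hLeq]
      have hκδ : κ < G ε' := by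
        rwa [Real.dist_eq, sub_zero, abs_of_pos hκ] at hdist
      have hLκlt : L κ < ε' := by
        by_contra hcon
        push_neg at hcon
        have := Gmono.monotoneOn (le_of_lt hε'pos) (le_of_lt hLpos) hcon
        rw [hGL] at this
        linarith
      rw [Real.dist_eq, sub_zero, abs_of_pos hLpos]
      exact lt_of_lt_of_le hLκlt (min_le_left _ _)
end

section
/- Let u : [0, ∞) × ℝ → ℝ with u and u_t continuous, u bounded below, and suppose u_t(t,x) ≥ ∫ K(x,y) u(t,y) dy + a(t,x) u(t,x) for all x ∈ ℝ, t > 0, with u(0, x) ≥ 0 for all x, where K : ℝ × ℝ → [0, ∞) is continuous with K₀ := sup_x ∫ K(x,y) dy < ∞ and a is continuous and bounded. Then u(t, x) ≥ 0 for all t > 0 and x ∈ ℝ. -/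
open MeasureTheory Real Set

/-- One time-step of the nonnegativity propagation: if `u(t₁, ·) ≥ 0` then
`u ≥ 0` on `[t₁, t₁ + δ]`, provided `(K₀ + a₀) * δ ≤ 1/2`. -/
lemma stmt_7_step
    (K : ℝ → ℝ → ℝ)
    (hKnonneg : ∀ x y, 0 ≤ K x y)
    (K₀ : ℝ)
    (hKint : ∀ x, Integrable (K x))
    (hK₀ : ∀ x, (∫ y, K x y) ≤ K₀)
    (a : ℝ → ℝ → ℝ)
    (a₀ : ℝ) (ha₀ : ∀ t x, |a t x| ≤ a₀)
    (u ut : ℝ → ℝ → ℝ)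
    (hucont : Continuous fun p : ℝ × ℝ => u p.1 p.2)
    (hderiv : ∀ x : ℝ, ∀ t : ℝ, 0 < t → HasDerivAt (fun τ => u τ x) (ut t x) t)
    (hbelow : ∃ m : ℝ, ∀ t : ℝ, 0 ≤ t → ∀ x : ℝ, m ≤ u t x)
    (huint : ∀ t : ℝ, 0 < t → ∀ x : ℝ, Integrable (fun y => K x y * u t y))
    (hineq : ∀ x : ℝ, ∀ t : ℝ, 0 < t →
      (∫ y, K x y * u t y) + a t x * u t x ≤ ut t x)
    (δ : ℝ) (hδ : 0 < δ) (hδ2 : (K₀ + a₀) * δ ≤ 1/2)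
    (t₁ : ℝ) (ht₁ : 0 ≤ t₁) (h0 : ∀ x, 0 ≤ u t₁ x) :
    ∀ t ∈ Icc t₁ (t₁ + δ), ∀ x, 0 ≤ u t x := by
  obtain ⟨m, hm⟩ := hbelow
  have hK₀0 : 0 ≤ K₀ := le_trans (integral_nonneg fun y => hKnonneg 0 y) (hK₀ 0)
  have ha₀0 : 0 ≤ a₀ := le_trans (abs_nonneg _) (ha₀ 0 0)
  set S : Set ℝ := {r | ∃ t ∈ Icc t₁ (t₁ + δ), ∃ x, u t x = r} with hS
  have hSne : S.Nonempty := ⟨u t₁ 0, t₁, ⟨le_refl _, by linarith⟩, 0, rfl⟩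
  have hSbdd : BddBelow S := by
    refine ⟨m, ?_⟩
    rintro r ⟨t, ht, x, rfl⟩
    exact hm t (le_trans ht₁ ht.1) x
  set θ := sInf S with hθ
  have hθ_le : ∀ t ∈ Icc t₁ (t₁ + δ), ∀ x, θ ≤ u t x := by
    intro t ht x
    exact csInf_le hSbdd ⟨t, ht, x, rfl⟩
  set θ' := min θ 0 with hθ'
  have hθ'0 : θ' ≤ 0 := min_le_right _ _
  set c := (K₀ + a₀) * θ' with hc
  have hc0 : c ≤ 0 := mul_nonpos_of_nonneg_of_nonpos (by linarith) hθ'0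
  -- key pointwise lower bound
  have key : ∀ t ∈ Icc t₁ (t₁ + δ), ∀ x, c * δ ≤ u t x := by
    intro t ht x
    have hcδ : c * δ ≤ 0 := mul_nonpos_of_nonpos_of_nonneg hc0 hδ.le
    set A : Set ℝ := Icc t₁ t ∩ {s | 0 ≤ u s x} with hA
    have hAne : A.Nonempty := ⟨t₁, ⟨le_refl _, ht.1⟩, h0 x⟩
    have hAbdd : BddAbove A := (bddAbove_Icc).mono (inter_subset_left)
    have hucx : Continuous fun s => u s x :=
      hucont.comp (continuous_id.prodMk continuous_const)
    have hAclosed : IsClosed A :=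
      isClosed_Icc.inter (isClosed_le continuous_const hucx)
    set s₀ := sSup A with hs₀
    have hs₀A : s₀ ∈ A := hAclosed.csSup_mem hAne hAbdd
    obtain ⟨⟨hs₀1, hs₀2⟩, hs₀u⟩ := hs₀A
    have hs₀u' : 0 ≤ u s₀ x := hs₀u
    rcases eq_or_lt_of_le hs₀2 with heq | hlt
    · rw [← heq]; linarith
    · -- u is negative on (s₀, t]
      have hneg : ∀ s ∈ Ioc s₀ t, u s x ≤ 0 := by
        intro s hs
        by_contra h
        push_neg at h
        have hsA : s ∈ A := ⟨⟨le_trans hs₀1 hs.1.le, hs.2⟩, h.le⟩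
        exact absurd (le_csSup hAbdd hsA) (not_le.mpr hs.1)
      -- derivative lower bound on (s₀, t)
      have hub : ∀ s ∈ Ioo s₀ t, c ≤ ut s x := by
        intro s hs
        have hspos : 0 < s := lt_of_le_of_lt (le_trans ht₁ hs₀1) hs.1
        have hsmem : s ∈ Icc t₁ (t₁ + δ) :=
          ⟨le_trans hs₀1 hs.1.le, le_trans hs.2.le ht.2⟩
        have h1 : θ' * K₀ ≤ ∫ y, K x y * u s y := by
          have hint1 : Integrable (fun y => θ' * K x y) := (hKint x).const_mul θ'
          have hmono : ∫ y, θ' * K x y ≤ ∫ y, K x y * u s y := by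
            refine integral_mono hint1 (huint s hspos x) (fun y => ?_)
            have h1 := hθ_le s hsmem y
            have h2 := hKnonneg x y
            nlinarith [min_le_left θ (0 : ℝ)]
          calc θ' * K₀ ≤ θ' * ∫ y, K x y :=
                mul_le_mul_of_nonpos_left (hK₀ x) hθ'0
            _ = ∫ y, θ' * K x y := by rw [integral_const_mul]
            _ ≤ _ := hmono
        have h2 : a₀ * θ' ≤ a s x * u s x := by
          have husx : u s x ≤ 0 := hneg s ⟨hs.1, hs.2.le⟩
          have hθu : θ' ≤ u s x := le_trans (min_le_left _ _) (hθ_le s hsmem x)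
          obtain ⟨hal, har⟩ := abs_le.mp (ha₀ s x)
          nlinarith
        calc c = K₀ * θ' + a₀ * θ' := by rw [hc]; ring
          _ ≤ (∫ y, K x y * u s y) + a s x * u s x := by
              have := h1; nlinarith
          _ ≤ ut s x := hineq x s hspos
      -- monotonicity of g s = u s x - c * s
      set g : ℝ → ℝ := fun s => u s x - c * s with hg
      have hgmono : MonotoneOn g (Icc s₀ t) := by
        apply monotoneOn_of_deriv_nonneg (convex_Icc _ _)
        · exact (hucx.sub (continuous_const.mul continuous_id)).continuousOn
        · intro s hs
          rw [interior_Icc] at hs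
          have hspos : 0 < s := lt_of_le_of_lt (le_trans ht₁ hs₀1) hs.1
          exact (((hderiv x s hspos).sub
            ((hasDerivAt_id s).const_mul c)).differentiableAt).differentiableWithinAt
        · intro s hs
          rw [interior_Icc] at hs
          have hspos : 0 < s := lt_of_le_of_lt (le_trans ht₁ hs₀1) hs.1
          have hd : HasDerivAt g (ut s x - c * 1) s :=
            (hderiv x s hspos).sub ((hasDerivAt_id s).const_mul c)
          rw [hd.deriv]
          linarith [hub s hs]
      have hgs : g s₀ ≤ g t :=
        hgmono ⟨le_refl _, hs₀2⟩ ⟨hs₀2, le_refl _⟩ hs₀2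
      simp only [hg] at hgs
      have htd : t - s₀ ≤ δ := by
        have h1 := ht.2
        linarith
      have hprod : c * (δ - (t - s₀)) ≤ 0 :=
        mul_nonpos_of_nonpos_of_nonneg hc0 (by linarith)
      nlinarith
  -- conclude θ ≥ 0
  have hθc : c * δ ≤ θ := by
    apply le_csInf hSne
    rintro r ⟨t, ht, x, rfl⟩
    exact key t ht x
  have hθ'c : c * δ ≤ θ' :=
    le_min hθc (mul_nonpos_of_nonpos_of_nonneg hc0 hδ.le)
  have hr : (1/2 : ℝ) * θ' ≤ (K₀ + a₀) * δ * θ' := mul_le_mul_of_nonpos_right hδ2 hθ'0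
  have hθ'pos : 0 ≤ θ' := by nlinarith
  have hθpos : 0 ≤ θ := le_trans hθ'pos (min_le_left _ _)
  intro t ht x
  exact le_trans hθpos (hθ_le t ht x)

theorem stmt_7
    (K : ℝ → ℝ → ℝ)
    (hKcont : Continuous fun p : ℝ × ℝ => K p.1 p.2)
    (hKnonneg : ∀ x y, 0 ≤ K x y)
    (K₀ : ℝ)
    (hKint : ∀ x, Integrable (K x))
    (hK₀ : ∀ x, (∫ y, K x y) ≤ K₀)
    (a : ℝ → ℝ → ℝ)
    (hacont : Continuous fun p : ℝ × ℝ => a p.1 p.2)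
    (a₀ : ℝ) (ha₀ : ∀ t x, |a t x| ≤ a₀)
    (u ut : ℝ → ℝ → ℝ)
    (hucont : Continuous fun p : ℝ × ℝ => u p.1 p.2)
    (hutcont : Continuous fun p : ℝ × ℝ => ut p.1 p.2)
    (hderiv : ∀ x : ℝ, ∀ t : ℝ, 0 < t → HasDerivAt (fun τ => u τ x) (ut t x) t)
    (hbelow : ∃ m : ℝ, ∀ t : ℝ, 0 ≤ t → ∀ x : ℝ, m ≤ u t x)
    (huint : ∀ t : ℝ, 0 < t → ∀ x : ℝ, Integrable (fun y => K x y * u t y))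
    (hineq : ∀ x : ℝ, ∀ t : ℝ, 0 < t →
      (∫ y, K x y * u t y) + a t x * u t x ≤ ut t x)
    (hinit : ∀ x : ℝ, 0 ≤ u 0 x) :
    ∀ t : ℝ, 0 < t → ∀ x : ℝ, 0 ≤ u t x := by
  have hK₀0 : 0 ≤ K₀ := le_trans (integral_nonneg fun y => hKnonneg 0 y) (hK₀ 0)
  have ha₀0 : 0 ≤ a₀ := le_trans (abs_nonneg _) (ha₀ 0 0)
  set δ : ℝ := 1 / (2 * (K₀ + a₀ + 1)) with hδdef
  have hden : 0 < 2 * (K₀ + a₀ + 1) := by linarith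
  have hδ : 0 < δ := by positivity
  have hδ2 : (K₀ + a₀) * δ ≤ 1/2 := by
    rw [hδdef, mul_one_div, div_le_div_iff₀ hden (by norm_num : (0:ℝ) < 2)]
    nlinarith
  have main : ∀ n : ℕ, ∀ t ∈ Icc (0 : ℝ) (n * δ), ∀ x, 0 ≤ u t x := by
    intro n
    induction n with
    | zero =>
      intro t ht x
      simp only [Nat.cast_zero, zero_mul] at ht
      have : t = 0 := le_antisymm ht.2 ht.1
      rw [this]; exact hinit x
    | succ n ih =>
      intro t ht x
      rcases le_or_gt t (n * δ) with h | h
      · exact ih t ⟨ht.1, h⟩ x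
      · have hnδ : (0 : ℝ) ≤ n * δ := by positivity
        have h0 : ∀ x, 0 ≤ u (n * δ) x :=
          fun x => ih (n * δ) ⟨hnδ, le_refl _⟩ x
        have ht2 : t ≤ n * δ + δ := by
          have := ht.2
          push_cast at this ⊢
          linarith
        exact stmt_7_step K hKnonneg K₀ hKint hK₀ a a₀ ha₀ u ut hucont hderiv
          ⟨_, hbelow.choose_spec⟩ huint hineq δ hδ hδ2 (n * δ) hnδ h0 t ⟨h.le, ht2⟩ x
  intro t htpos x
  obtain ⟨n, hn⟩ := exists_nat_ge (t / δ)
  have : t ≤ n * δ := by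
    rw [div_le_iff₀ hδ] at hn
    linarith
  exact main n t ⟨htpos.le, this⟩ x
end

section
/- Half-line comparison principle: let K : ℝ × ℝ → [0,∞) be continuous with sup_x ∫ K(x,y) dy < ∞, a continuous and bounded, X : [0,∞) → ℝ continuous, and u : [0,∞) × ℝ → ℝ with u, u_t continuous and u(t,x) → 0 as x → ∞ locally uniformly in t. If u_t(t,x) ≥ ∫ K(x,y) u(t,y) dy + a(t,x) u(t,x) whenever x > X(t) and t > 0, u(t,x) ≥ 0 whenever x ≤ X(t) and t > 0, and u(0,·) ≥ 0, then u(t,x) ≥ 0 for all (t,x) ∈ (0,∞) × ℝ. -/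
open MeasureTheory Real Set Filter Topology

theorem stmt_8
    (K : ℝ → ℝ → ℝ)
    (hKcont : Continuous fun p : ℝ × ℝ => K p.1 p.2)
    (hKnonneg : ∀ x y, 0 ≤ K x y)
    (K₀ : ℝ)
    (hKint : ∀ x, Integrable (K x))
    (hK₀ : ∀ x, (∫ y, K x y) ≤ K₀)
    (a : ℝ → ℝ → ℝ)
    (hacont : Continuous fun p : ℝ × ℝ => a p.1 p.2)
    (a₀ : ℝ) (ha₀ : ∀ t x, |a t x| ≤ a₀)
    (X : ℝ → ℝ) (hXcont : Continuous X)
    (u ut : ℝ → ℝ → ℝ)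
    (hucont : Continuous fun p : ℝ × ℝ => u p.1 p.2)
    (hutcont : Continuous fun p : ℝ × ℝ => ut p.1 p.2)
    (hderiv : ∀ x : ℝ, ∀ t : ℝ, 0 < t → HasDerivAt (fun τ => u τ x) (ut t x) t)
    (hlimit : ∀ T : ℝ, 0 < T → ∀ ε : ℝ, 0 < ε → ∃ R : ℝ,
      ∀ t ∈ Icc (0 : ℝ) T, ∀ x : ℝ, R ≤ x → |u t x| ≤ ε)
    (huint : ∀ t : ℝ, 0 < t → ∀ x : ℝ, Integrable (fun y => K x y * u t y))
    (hineq : ∀ t : ℝ, 0 < t → ∀ x : ℝ, X t < x →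
      (∫ y, K x y * u t y) + a t x * u t x ≤ ut t x)
    (hleft : ∀ t : ℝ, 0 < t → ∀ x : ℝ, x ≤ X t → 0 ≤ u t x)
    (hinit : ∀ x : ℝ, 0 ≤ u 0 x) :
    ∀ t : ℝ, 0 < t → ∀ x : ℝ, 0 ≤ u t x := by
  have hK₀0 : 0 ≤ K₀ := le_trans (integral_nonneg fun y => hKnonneg 0 y) (hK₀ 0)
  have ha₀0 : 0 ≤ a₀ := le_trans (abs_nonneg _) (ha₀ 0 0)
  set L : ℝ := K₀ + a₀ + 1 with hLdef
  have hL : 0 < L := by positivity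
  have key : ∀ T : ℝ, 0 < T → ∀ ε : ℝ, 0 < ε → ∀ t ∈ Icc (0:ℝ) T, ∀ x : ℝ,
      -(ε * Real.exp (L * t)) < u t x := by
    intro T hT ε hε
    by_contra hcon
    push_neg at hcon
    obtain ⟨t₁, ht₁, x₁, hx₁⟩ := hcon
    obtain ⟨R, hR⟩ := hlimit T hT (ε/2) (by linarith)
    obtain ⟨t₀, ht₀mem, ht₀min⟩ :=
      isCompact_Icc.exists_isMinOn (⟨0, le_refl 0, hT.le⟩ : (Icc (0:ℝ) T).Nonempty)
        hXcont.continuousOn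
    set S : Set (ℝ × ℝ) :=
      {p | p.1 ∈ Icc (0:ℝ) T ∧ u p.1 p.2 + ε * Real.exp (L * p.1) ≤ 0} with hSdef
    -- any point of S has positive time and lies strictly right of X
    have hSfacts : ∀ p ∈ S, 0 < p.1 ∧ X p.1 < p.2 := by
      intro p hp
      obtain ⟨hpT, hpu⟩ := hp
      have hexp1 : 0 < Real.exp (L * p.1) := Real.exp_pos _
      have hneg : u p.1 p.2 < 0 := by nlinarith
      have hp1 : 0 < p.1 := by
        rcases eq_or_lt_of_le hpT.1 with h | h
        · exfalso
          have := hinit p.2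
          rw [← h] at hneg
          linarith
        · exact h
      refine ⟨hp1, ?_⟩
      by_contra h
      push_neg at h
      have := hleft p.1 hp1 p.2 h
      linarith
    -- S is closed
    have hSclosed : IsClosed S := by
      have h1 : IsClosed {p : ℝ × ℝ | p.1 ∈ Icc (0:ℝ) T} :=
        isClosed_Icc.preimage continuous_fst
      have h2 : IsClosed {p : ℝ × ℝ | u p.1 p.2 + ε * Real.exp (L * p.1) ≤ 0} := by
        apply isClosed_le _ continuous_const
        exact hucont.add
          (continuous_const.mul (Real.continuous_exp.comp (continuous_const.mul continuous_fst)))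
      exact h1.inter h2
    -- S is contained in a compact box
    have hSsub : S ⊆ Icc (0:ℝ) T ×ˢ Icc (X t₀) R := by
      intro p hp
      obtain ⟨hp1, hp2⟩ := hSfacts p hp
      obtain ⟨hpT, hpu⟩ := hp
      refine ⟨hpT, ?_, ?_⟩
      · exact le_of_lt (lt_of_le_of_lt (isMinOn_iff.mp ht₀min p.1 hpT) hp2)
      · by_contra h
        push_neg at h
        have habs := hR p.1 hpT p.2 h.le
        have hexp1 : (1:ℝ) ≤ Real.exp (L * p.1) := by
          rw [← Real.exp_zero]
          apply Real.exp_le_exp.mpr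
          have := hpT.1
          positivity
        have hneg : u p.1 p.2 ≤ -ε := by nlinarith
        have : ε ≤ |u p.1 p.2| := by
          rw [abs_le] at habs
          have := neg_le_abs (u p.1 p.2)
          calc ε ≤ -(u p.1 p.2) := by linarith
          _ ≤ |u p.1 p.2| := this
        linarith
    have hScpt : IsCompact S :=
      IsCompact.of_isClosed_subset (isCompact_Icc.prod isCompact_Icc) hSclosed hSsub
    have hSne : S.Nonempty := ⟨(t₁, x₁), ht₁, by simpa using by linarith⟩
    obtain ⟨p, hpS, hpmin⟩ := hScpt.exists_isMinOn hSne continuous_fst.continuousOn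
    set ts := p.1 with htsdef
    set xs := p.2 with hxsdef
    obtain ⟨htspos, hXxs⟩ := hSfacts p hpS
    have htsT : ts ≤ T := hpS.1.2
    -- minimality : everything before ts is fine
    have hmin : ∀ t ∈ Ico (0:ℝ) ts, ∀ x : ℝ, 0 < u t x + ε * Real.exp (L * t) := by
      intro t ht x
      by_contra h
      push_neg at h
      have hmem : (t, x) ∈ S := ⟨⟨ht.1, le_trans ht.2.le htsT⟩, h⟩
      have := isMinOn_iff.mp hpmin (t, x) hmem
      exact absurd ht.2 (not_lt.mpr this)
    -- left-limit : at time ts everything is still ≥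
    haveI hNB : (𝓝[Ico (0:ℝ) ts] ts).NeBot := by
      apply mem_closure_iff_nhdsWithin_neBot.mp
      rw [closure_Ico htspos.ne]
      exact ⟨htspos.le, le_refl ts⟩
    have hlim : ∀ x : ℝ, 0 ≤ u ts x + ε * Real.exp (L * ts) := by
      intro x
      have hcont : Continuous (fun t => u t x + ε * Real.exp (L * t)) := by
        exact (hucont.comp (continuous_id.prodMk continuous_const)).add
          (continuous_const.mul (Real.continuous_exp.comp (continuous_const.mul continuous_id)))
      exact ge_of_tendsto (hcont.continuousWithinAt (s := Ico 0 ts))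
        (eventually_nhdsWithin_of_forall fun t ht => (hmin t ht x).le)
    have hequ : u ts xs = -(ε * Real.exp (L * ts)) := by
      have h1 : u ts xs + ε * Real.exp (L * ts) ≤ 0 := hpS.2
      have h2 := hlim xs
      linarith
    -- the derivative at the minimal time is ≤ 0
    have hexpD : HasDerivAt (fun t : ℝ => Real.exp (L * t)) (Real.exp (L * ts) * L) ts := by
      have h1 : HasDerivAt (fun t : ℝ => L * t) L ts := by
        simpa using (hasDerivAt_id ts).const_mul L
      simpa using h1.exp
    have hφ : HasDerivAt (fun t => u t xs + ε * Real.exp (L * t))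
        (ut ts xs + ε * (Real.exp (L * ts) * L)) ts :=
      (hderiv xs ts htspos).add (hexpD.const_mul ε)
    have hIco : (Ico (0:ℝ) ts) \ {ts} = Ico 0 ts := by
      apply Set.diff_singleton_eq_self
      simp
    have hslope := hasDerivWithinAt_iff_tendsto_slope.mp
      (hφ.hasDerivWithinAt (s := Ico 0 ts))
    rw [hIco] at hslope
    have hd0 : ut ts xs + ε * (Real.exp (L * ts) * L) ≤ 0 := by
      refine le_of_tendsto hslope (eventually_nhdsWithin_of_forall ?_)
      intro t ht
      rw [slope_def_field]
      apply div_nonpos_of_nonneg_of_nonpos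
      · have h1 := (hmin t ht xs).le
        have h2 : u ts xs + ε * Real.exp (L * ts) = 0 := by rw [hequ]; ring
        linarith
      · linarith [ht.2]
    -- integral lower bound
    set c := ε * Real.exp (L * ts) with hcdef
    have hc : 0 < c := by positivity
    have huge : ∀ y, -c ≤ u ts y := fun y => by linarith [hlim y]
    have hint1 : Integrable (fun y => K xs y * (-c)) := (hKint xs).mul_const _
    have hmono : (∫ y, K xs y * (-c)) ≤ ∫ y, K xs y * u ts y :=
      integral_mono hint1 (huint ts htspos xs)
        (fun y => mul_le_mul_of_nonneg_left (huge y) (hKnonneg xs y))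
    have heval : (∫ y, K xs y * (-c)) = (∫ y, K xs y) * (-c) := integral_mul_const _ _
    have hK0c : K₀ * (-c) ≤ (∫ y, K xs y) * (-c) :=
      mul_le_mul_of_nonpos_right (hK₀ xs) (by linarith)
    have ha_term : -(a₀ * c) ≤ a ts xs * u ts xs := by
      have h1 : |a ts xs * u ts xs| ≤ a₀ * c := by
        rw [abs_mul, hequ, abs_neg, abs_of_nonneg hc.le]
        exact mul_le_mul_of_nonneg_right (ha₀ ts xs) hc.le
      linarith [neg_abs_le (a ts xs * u ts xs)]
    have hfin := hineq ts htspos xs hXxs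
    have hut_le : ut ts xs ≤ -(c * L) := by
      have : c * L = ε * (Real.exp (L * ts) * L) := by rw [hcdef]; ring
      linarith
    have hcle : c ≤ 0 := by nlinarith [hfin, hmono, heval, hK0c, ha_term, hut_le]
    linarith
  intro t ht x
  by_contra h
  push_neg at h
  have hε : 0 < -u t x / Real.exp (L * t) := div_pos (neg_pos.mpr h) (Real.exp_pos _)
  have hk := key t ht _ hε t ⟨ht.le, le_refl t⟩ x
  rw [div_mul_cancel₀ _ (Real.exp_pos (L * t)).ne'] at hk
  linarith
end

section
/- Bounded oscillation from a Lipschitz-in-time bound: let u : ℝ × ℝ → (0,1) be continuous, strictly decreasing in x with u(t,−∞)=1, u(t,∞)=0, and with |u_t| ≤ C̄ everywhere; suppose also there are c₊, c₋, h₊, h₋ > 0 and a C¹ function X : ℝ → ℝ with derivative in [c_min, c_max] ⊂ (0,∞) such that u(t, x + X(t) + h₊) ≤ e^{−c₊ x} for x ≥ 0 and u(t, x + X(t) − h₋) ≥ 1 − e^{c₋ x} for x ≤ 0 for all t. Let θ ∈ (0,1) and define X_θ(t) by u(t, X_θ(t)) = θ. Then for every δ > 0, sup_{|t−s|≤δ}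 |X_θ(t) − X_θ(s)| < ∞. -/
open Real Set Filter

theorem stmt_13
    (u ut : ℝ → ℝ → ℝ)
    (hucont : Continuous fun p : ℝ × ℝ => u p.1 p.2)
    (hurange : ∀ t x, u t x ∈ Ioo (0 : ℝ) 1)
    (huanti : ∀ t, StrictAnti (u t))
    (hu_atBot : ∀ t, Tendsto (u t) atBot (nhds 1))
    (hu_atTop : ∀ t, Tendsto (u t) atTop (nhds 0))
    (Cbar : ℝ)
    (hderiv : ∀ t x : ℝ, HasDerivAt (fun τ => u τ x) (ut t x) t)
    (hCbar : ∀ t x, |ut t x| ≤ Cbar)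
    (cp cm hp hm cmin cmax : ℝ)
    (hcp : 0 < cp) (hcm : 0 < cm) (hhp : 0 < hp) (hhm : 0 < hm)
    (hcmin : 0 < cmin) (hcmincmax : cmin ≤ cmax)
    (X X' : ℝ → ℝ)
    (hX : ∀ t, HasDerivAt X (X' t) t)
    (hX' : ∀ t, X' t ∈ Icc cmin cmax)
    (hupper : ∀ t : ℝ, ∀ x : ℝ, 0 ≤ x → u t (x + X t + hp) ≤ Real.exp (-cp * x))
    (hlower : ∀ t : ℝ, ∀ x : ℝ, x ≤ 0 → 1 - Real.exp (cm * x) ≤ u t (x + X t - hm))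
    (θ : ℝ) (hθ : θ ∈ Ioo (0 : ℝ) 1)
    (Xθ : ℝ → ℝ) (hXθ : ∀ t, u t (Xθ t) = θ) :
    ∀ δ : ℝ, 0 < δ → ∃ C : ℝ, ∀ t s : ℝ, |t - s| ≤ δ → |Xθ t - Xθ s| ≤ C := by

  -- Step 1: Xθ stays within bounded distance of X.
  set x0 : ℝ := max 0 (-Real.log θ / cp) with hx0
  set x1 : ℝ := min 0 (Real.log (1 - θ) / cm) with hx1
  have hx0nn : 0 ≤ x0 := le_max_left _ _
  have hx1np : x1 ≤ 0 := min_le_left _ _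
  have hθ0 := hθ.1
  have hθ1 := hθ.2
  have hub : ∀ t, Xθ t ≤ x0 + X t + hp := by
    intro t
    by_contra h
    push_neg at h
    have h1 : u t (Xθ t) < u t (x0 + X t + hp) := huanti t h
    have h2 : u t (x0 + X t + hp) ≤ Real.exp (-cp * x0) := hupper t x0 hx0nn
    have h3 : Real.exp (-cp * x0) ≤ θ := by
      rw [← Real.exp_log hθ0]
      apply Real.exp_le_exp.2
      have h5 : -Real.log θ / cp ≤ x0 := le_max_right _ _
      have h6 := (div_le_iff₀ hcp).mp h5
      linarith [mul_comm x0 cp]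
    rw [hXθ t] at h1; linarith
  have hlb : ∀ t, x1 + X t - hm ≤ Xθ t := by
    intro t
    by_contra h
    push_neg at h
    have h1 : u t (x1 + X t - hm) < u t (Xθ t) := huanti t h
    have h2 : 1 - Real.exp (cm * x1) ≤ u t (x1 + X t - hm) := hlower t x1 hx1np
    have h3 : θ ≤ 1 - Real.exp (cm * x1) := by
      have h4 : Real.exp (cm * x1) ≤ 1 - θ := by
        rw [← Real.exp_log (by linarith : (0:ℝ) < 1 - θ)]
        apply Real.exp_le_exp.2
        have h5 : x1 ≤ Real.log (1 - θ) / cm := min_le_right _ _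
        have h6 := (le_div_iff₀ hcm).mp h5
        linarith [mul_comm x1 cm]
      linarith
    rw [hXθ t] at h1; linarith
  set M : ℝ := max (x0 + hp) (hm - x1) with hM
  have hdist : ∀ t, |Xθ t - X t| ≤ M := by
    intro t
    rw [abs_le]
    constructor
    · have := hlb t
      have : hm - x1 ≤ M := le_max_right _ _
      linarith [hlb t]
    · have := hub t
      have : x0 + hp ≤ M := le_max_left _ _
      linarith [hub t]
  -- Step 2: X is Lipschitz with constant cmax.
  have hXlip : ∀ t s : ℝ, s < t → |X t - X s| ≤ cmax * (t - s) := by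
    intro t s hst
    obtain ⟨c, _, hc⟩ := exists_hasDerivAt_eq_slope X X' hst
      (fun x _ => (hX x).continuousAt.continuousWithinAt)
      (fun x _ => hX x)
    have hne : t - s ≠ 0 := sub_ne_zero.mpr hst.ne'
    have hslope : X t - X s = X' c * (t - s) := ((eq_div_iff hne).mp hc).symm
    rw [hslope, abs_mul]
    have h1 : |X' c| ≤ cmax := by
      rw [abs_of_nonneg (le_trans hcmin.le (hX' c).1)]
      exact (hX' c).2
    have h2 : |t - s| = t - s := abs_of_pos (by linarith)
    rw [h2]
    exact mul_le_mul_of_nonneg_right h1 (by linarith)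
  have hXlip' : ∀ t s : ℝ, |X t - X s| ≤ cmax * |t - s| := by
    intro t s
    rcases lt_trichotomy s t with h | h | h
    · rw [abs_of_pos (by linarith : (0:ℝ) < t - s)]
      exact hXlip t s h
    · subst h; simp
    · rw [abs_of_neg (by linarith : t - s < 0), abs_sub_comm]
      have := hXlip s t h
      linarith
  intro δ hδ
  refine ⟨2 * M + cmax * δ, fun t s hts => ?_⟩
  have h1 := hdist t
  have h2 := hdist s
  have h3 := hXlip' t s
  have h4 : cmax * |t - s| ≤ cmax * δ :=
    mul_le_mul_of_nonneg_left hts (by linarith)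
  calc |Xθ t - Xθ s| = |(Xθ t - X t) + (X t - X s) + (X s - Xθ s)| := by ring_nf
    _ ≤ |Xθ t - X t| + |X t - X s| + |X s - Xθ s| := by
        apply (abs_add_le _ _).trans
        gcongr
        exact abs_add_le _ _
    _ ≤ M + cmax * δ + M := by
        rw [abs_sub_comm (X s)]
        gcongr <;> linarith
    _ = 2 * M + cmax * δ := by ring
end

section
/- Modification of a continuous function with linear-in-time lower propagation bound: let X : [s, ∞) → ℝ be continuous, and suppose there are constants c_B > 0, t_B ≥ 0, C₀ ≥ 1, c₀ > c_B/2, and a function Y : [s,∞) → ℝ with |X(t) − Y(t)| ≤ C₀ for all t, Y(t) − Y(t₀) ≤ c₀(t − t₀) for t ≥ t₀ ≥ s, and X(t) − X(t₀) ≥ (3c_B/4)(t − t₀ − t_B) for t ≥ t₀ ≥ s. Then there exists a strictly increasing sequence s = T₀ < T₁ < T₂ < ⋯ with T_n − T_{n−1} ∈ [2/(2c₀ − c_B), 4(2C₀+1)/c_B + 3t_B] for all n, such that for each n, X(t) < X(T_{n−1}) + 2C₀ + 1 + (c_B/2)(t − T_{n−1}) for t ∈ [T_{n−1}, T_n) and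 X(T_n) = X(T_{n−1}) + 2C₀ + 1 + (c_B/2)(T_n − T_{n−1}). -/
open Real Set

theorem stmt_14
    (s cB tB C₀ c₀ : ℝ)
    (hcB : 0 < cB) (htB : 0 ≤ tB) (hC₀ : 1 ≤ C₀) (hc₀ : cB / 2 < c₀)
    (X Y : ℝ → ℝ)
    (hXcont : ContinuousOn X (Ici s))
    (hXY : ∀ t : ℝ, s ≤ t → |X t - Y t| ≤ C₀)
    (hY : ∀ t₀ t : ℝ, s ≤ t₀ → t₀ ≤ t → Y t - Y t₀ ≤ c₀ * (t - t₀))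
    (hX : ∀ t₀ t : ℝ, s ≤ t₀ → t₀ ≤ t → (3 * cB / 4) * (t - t₀ - tB) ≤ X t - X t₀) :
    ∃ T : ℕ → ℝ, T 0 = s ∧ StrictMono T ∧
      (∀ n : ℕ, T (n + 1) - T n ∈
        Icc (2 / (2 * c₀ - cB)) (4 * (2 * C₀ + 1) / cB + 3 * tB)) ∧
      (∀ n : ℕ, ∀ t : ℝ, t ∈ Ico (T n) (T (n + 1)) →
        X t < X (T n) + 2 * C₀ + 1 + (cB / 2) * (t - T n)) ∧
      (∀ n : ℕ, X (T (n + 1)) = X (T n) + 2 * C₀ + 1 + (cB / 2) * (T (n + 1) - T n)) := by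
  have hc : 0 < 2 * c₀ - cB := by linarith
  have hLpos : 0 < 2 / (2 * c₀ - cB) := by positivity
  set L := 2 / (2 * c₀ - cB) with hLdef
  set U := 4 * (2 * C₀ + 1) / cB + 3 * tB with hUdef
  have hUpos : 0 < U := by
    rw [hUdef]
    have : 0 < 4 * (2 * C₀ + 1) / cB := by positivity
    linarith
  -- single step lemma
  have step : ∀ T₀ : ℝ, s ≤ T₀ → ∃ T₁ : ℝ, T₀ < T₁ ∧
      T₁ - T₀ ∈ Icc L U ∧
      (∀ t ∈ Ico T₀ T₁, X t < X T₀ + 2 * C₀ + 1 + (cB / 2) * (t - T₀)) ∧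
      X T₁ = X T₀ + 2 * C₀ + 1 + (cB / 2) * (T₁ - T₀) := by
    intro T₀ hT₀
    set t₁ := T₀ + U with ht₁
    have hT₀t₁ : T₀ ≤ t₁ := by simp [ht₁]; linarith
    set A : Set ℝ := {t | t ∈ Icc T₀ t₁ ∧ X T₀ + 2 * C₀ + 1 + (cB / 2) * (t - T₀) ≤ X t}
      with hA
    have ht₁A : t₁ ∈ A := by
      refine ⟨⟨hT₀t₁, le_refl _⟩, ?_⟩
      have h1 := hX T₀ t₁ hT₀ hT₀t₁
      have heq : (3 * cB / 4) * (t₁ - T₀ - tB) = 2 * C₀ + 1 + (cB / 2) * (t₁ - T₀) := by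
        have ht : t₁ - T₀ = 4 * (2 * C₀ + 1) / cB + 3 * tB := by simp [ht₁, hUdef]
        rw [ht]
        field_simp
        ring
      linarith
    have hAne : A.Nonempty := ⟨t₁, ht₁A⟩
    have hAbdd : BddBelow A := ⟨T₀, fun x hx => hx.1.1⟩
    have hclosed : IsClosed A := by
      have hsub : Icc T₀ t₁ ⊆ Ici s := fun x hx => le_trans hT₀ hx.1
      have hcont : ContinuousOn (fun t => X t - (X T₀ + 2 * C₀ + 1 + (cB / 2) * (t - T₀)))
          (Icc T₀ t₁) := by
        apply ContinuousOn.sub (hXcont.mono hsub)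
        fun_prop
      have : A = Icc T₀ t₁ ∩
          (fun t => X t - (X T₀ + 2 * C₀ + 1 + (cB / 2) * (t - T₀))) ⁻¹' Ici 0 := by
        ext x
        simp only [hA, mem_setOf_eq, mem_inter_iff, mem_preimage, mem_Ici]
        constructor
        · rintro ⟨h1, h2⟩; exact ⟨h1, by linarith⟩
        · rintro ⟨h1, h2⟩; exact ⟨h1, by linarith⟩
      rw [this]
      exact hcont.preimage_isClosed_of_isClosed isClosed_Icc isClosed_Ici
    set T₁ := sInf A with hT₁def
    have hT₁A : T₁ ∈ A := hclosed.csInf_mem hAne hAbdd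
    have hT₁le : T₁ ≤ t₁ := hT₁A.1.2
    have hT₀T₁ : T₀ ≤ T₁ := hT₁A.1.1
    -- strict before T₁
    have hbefore : ∀ t ∈ Ico T₀ T₁, X t < X T₀ + 2 * C₀ + 1 + (cB / 2) * (t - T₀) := by
      intro t ⟨ht0, ht1⟩
      by_contra h
      push_neg at h
      have : t ∈ A := ⟨⟨ht0, le_trans (le_of_lt ht1) hT₁le⟩, h⟩
      exact absurd (csInf_le hAbdd this) (not_le.mpr ht1)
    -- lower bound on T₁ - T₀
    have hlow : L ≤ T₁ - T₀ := by
      by_contra h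
      push_neg at h
      have h2 := hT₁A.2
      have hsT₁ : s ≤ T₁ := le_trans hT₀ hT₀T₁
      have hXYa := hXY T₁ hsT₁
      have hXYb := hXY T₀ hT₀
      have hYa := hY T₀ T₁ hT₀ hT₀T₁
      rw [abs_le] at hXYa hXYb
      -- X T₁ - X T₀ ≤ 2C₀ + c₀ (T₁ - T₀)
      have hup : X T₁ - X T₀ ≤ 2 * C₀ + c₀ * (T₁ - T₀) := by linarith [hXYa.1, hXYa.2, hXYb.1, hXYb.2]
      -- from h2: 2C₀+1 + (cB/2)(T₁-T₀) ≤ X T₁ - X T₀ + ... 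
      have hkey : 1 ≤ (c₀ - cB / 2) * (T₁ - T₀) := by nlinarith
      have hlt : (c₀ - cB / 2) * (T₁ - T₀) < 1 := by
        have : (c₀ - cB / 2) * (T₁ - T₀) < (c₀ - cB / 2) * L := by
          apply mul_lt_mul_of_pos_left h
          linarith
        have hLeq : (c₀ - cB / 2) * L = 1 := by
          rw [hLdef]; rw [mul_div_assoc', div_eq_one_iff_eq hc.ne']; ring
        linarith
      linarith
    have hT₀ltT₁ : T₀ < T₁ := by linarith
    -- equality at T₁ via IVT
    have heq : X T₁ = X T₀ + 2 * C₀ + 1 + (cB / 2) * (T₁ - T₀) := by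
      set g : ℝ → ℝ := fun t => X t - (X T₀ + 2 * C₀ + 1 + (cB / 2) * (t - T₀)) with hg
      have hgcont : ContinuousOn g (Icc T₀ T₁) := by
        apply ContinuousOn.sub (hXcont.mono (fun x hx => le_trans hT₀ hx.1))
        fun_prop
      have hivt := intermediate_value_Icc hT₀T₁ hgcont
      have h0mem : (0 : ℝ) ∈ Icc (g T₀) (g T₁) := by
        constructor
        · simp only [hg]; simp; linarith
        · simp only [hg]; linarith [hT₁A.2]
      obtain ⟨c, hc1, hc2⟩ := hivt h0mem
      have hcA : c ∈ A := by
        refine ⟨⟨hc1.1, le_trans hc1.2 hT₁le⟩, ?_⟩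
        simp only [hg] at hc2
        linarith [hc2.ge, hc2.le]
      have : T₁ ≤ c := csInf_le hAbdd hcA
      have hceq : c = T₁ := le_antisymm hc1.2 this
      rw [← hceq]
      simp only [hg] at hc2
      have : X c - (X T₀ + 2 * C₀ + 1 + cB / 2 * (c - T₀)) = 0 := hc2
      linarith
    exact ⟨T₁, hT₀ltT₁, ⟨hlow, by simp [ht₁] at hT₁le; linarith⟩, hbefore, heq⟩
  -- build the sequence by iteration on a subtype
  choose! f hf1 hf2 hf3 hf4 using step
  set F : {t : ℝ // s ≤ t} → {t : ℝ // s ≤ t} :=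
    fun p => ⟨f p.1, le_of_lt (lt_of_le_of_lt p.2 (hf1 p.1 p.2))⟩ with hF
  set T : ℕ → ℝ := fun n => (F^[n] ⟨s, le_refl s⟩).1 with hT
  have hTs : ∀ n, s ≤ T n := fun n => (F^[n] ⟨s, le_refl s⟩).2
  have hTsucc : ∀ n, T (n + 1) = f (T n) := by
    intro n
    simp only [hT, Function.iterate_succ_apply']
    rfl
  refine ⟨T, ?_, ?_, ?_, ?_, ?_⟩
  · simp [hT]
  · apply strictMono_nat_of_lt_succ
    intro n
    rw [hTsucc n]
    exact hf1 (T n) (hTs n)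
  · intro n; rw [hTsucc n]; exact hf2 (T n) (hTs n)
  · intro n; rw [hTsucc n]; exact hf3 (T n) (hTs n)
  · intro n; rw [hTsucc n]; exact hf4 (T n) (hTs n)
end
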